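/- Let 0 < α < 1 and for each integer l ≥ 2 define, for f ∈ L²_α[0,1], the operator (𝓑_l f)(s) = −2(l − 1) s^{l−2} ∫_s^1 f(r) r^{1−l} dr − f(s) for s ∈ (0,1). Then each 𝓑_l is bounded on L²_α[0,1] and ‖𝓑_l‖ ≤ 23/α, uniformly in l ≥ 2. -/

import Mathlib

open MeasureTheory Real Set ENNReal NNReal

lemma aux_geom (m : ℕ) {r : ℝ} (h0 : 0 ≤ r) (h1 : r ≤ 1) :
    r * (1 - r^(m+1)) ≤ ((m:ℝ)+1) * (1-r) := by
  have h2 : (∑ i ∈ Finset.range (m+1), r^i) * (r - 1) = r^(m+1) - 1 := geom_sum_mul r (m+1)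
  have h3 : (∑ i ∈ Finset.range (m+1), r^i) ≤ ((m:ℝ)+1) := by
    calc (∑ i ∈ Finset.range (m+1), r^i) ≤ ∑ i ∈ Finset.range (m+1), 1 := by
          apply Finset.sum_le_sum
          intro i _
          exact pow_le_one₀ h0 h1
      _ = ((m:ℝ)+1) := by simp
  have h4 : (0:ℝ) ≤ ∑ i ∈ Finset.range (m+1), r^i := by
    apply Finset.sum_nonneg; intro i _; positivity
  have h5 : 1 - r^(m+1) = (∑ i ∈ Finset.range (m+1), r^i) * (1-r) := by linear_combination h2
  rw [h5]
  have h6 : (∑ i ∈ Finset.range (m+1), r^i) * (1-r) ≤ ((m:ℝ)+1) * (1-r) :=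
    mul_le_mul_of_nonneg_right h3 (by linarith)
  have h7 : r * ((∑ i ∈ Finset.range (m+1), r^i) * (1-r)) ≤ 1 * ((∑ i ∈ Finset.range (m+1), r^i) * (1-r)) :=
    mul_le_mul_of_nonneg_right h1 (mul_nonneg h4 (by linarith))
  linarith

/-- monotone limit exhaustion of `Ioo s 1` -/
lemma lintegral_Ioo_lim {s : ℝ} (hs1 : s < 1) (g : ℝ → ℝ≥0∞) (hg : Measurable g) (M : ℝ≥0∞)
    (hbound : ∀ t, s < t → t < 1 → ∫⁻ r in Ioo s t, g r ≤ M) :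
    ∫⁻ r in Ioo s (1:ℝ), g r ≤ M := by
  set t : ℕ → ℝ := fun n => 1 - (1-s)/(n+1) with ht
  have hs1' : (0:ℝ) < 1 - s := by linarith
  have ht1 : ∀ n : ℕ, t n < 1 := by
    intro n
    have : (0:ℝ) < (1-s)/(n+1) := by positivity
    simp only [ht]; linarith
  have hts : ∀ n : ℕ, s ≤ t n := by
    intro n
    have h1 : (1-s)/((n:ℝ)+1) ≤ (1-s) := by
      apply div_le_self hs1'.le
      have : (0:ℝ) ≤ (n:ℝ) := Nat.cast_nonneg n
      linarith
    simp only [ht]; linarith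
  have htmono : Monotone t := by
    apply monotone_nat_of_le_succ
    intro n
    simp only [ht]
    have : (1-s)/((n:ℝ)+1+1) ≤ (1-s)/((n:ℝ)+1) := by
      apply div_le_div_of_nonneg_left hs1'.le (by positivity) (by linarith)
    push_cast
    linarith
  have hmono : Monotone (fun n => (Ioo s (t n)).indicator g) := by
    intro a b hab
    exact Set.indicator_le_indicator_of_subset (Ioo_subset_Ioo le_rfl (htmono hab))
      (fun x => zero_le)
  have hpt : ∀ r, (Ioo s 1).indicator g r = ⨆ n, (Ioo s (t n)).indicator g r := by
    intro r
    by_cases hr : r ∈ Ioo s 1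
    · obtain ⟨n, hn⟩ : ∃ n : ℕ, (1-s)/(1-r) < (n:ℝ)+1 := by
        obtain ⟨n, hn⟩ := exists_nat_gt ((1-s)/(1-r))
        exact ⟨n, by push_cast; linarith⟩
      have hr1 : (0:ℝ) < 1 - r := by linarith [hr.2]
      have hrn : r ∈ Ioo s (t n) := by
        refine ⟨hr.1, ?_⟩
        have : (1-s)/((n:ℝ)+1) < 1 - r := by
          rw [div_lt_iff₀ (by positivity : (0:ℝ) < (n:ℝ)+1)]
          rw [div_lt_iff₀ hr1] at hn
          nlinarith
        simp only [ht]; linarith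
      apply le_antisymm
      · rw [Set.indicator_of_mem hr]
        refine le_iSup_of_le n ?_
        rw [Set.indicator_of_mem hrn]
      · apply iSup_le
        intro n'
        rw [Set.indicator_of_mem hr]
        exact Set.indicator_le_self _ _ r
    · rw [Set.indicator_of_notMem hr]
      have : ∀ n : ℕ, (Ioo s (t n)).indicator g r = 0 := by
        intro n
        apply Set.indicator_of_notMem
        intro hmem
        exact hr ⟨hmem.1, lt_trans hmem.2 (ht1 n)⟩
      simp [this]
  calc ∫⁻ r in Ioo s (1:ℝ), g r = ∫⁻ r, (Ioo s 1).indicator g r := 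
        (lintegral_indicator measurableSet_Ioo g).symm
    _ = ∫⁻ r, ⨆ n, (Ioo s (t n)).indicator g r := lintegral_congr hpt
    _ = ⨆ n, ∫⁻ r, (Ioo s (t n)).indicator g r := 
        lintegral_iSup (fun n => hg.indicator measurableSet_Ioo) hmono
    _ ≤ M := by
      apply iSup_le
      intro n
      rw [lintegral_indicator measurableSet_Ioo]
      rcases lt_or_ge s (t n) with h | h
      · exact hbound (t n) h (ht1 n)
      · rw [Set.Ioo_eq_empty (not_lt.2 h)]
        simp

lemma auxL2 {α : ℝ} (hα0 : 0 < α) (hα1 : α < 1) (m : ℕ) {r : ℝ} (hr0 : 0 < r) (hr1 : r < 1) :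
    ∫⁻ s in Ioo (0:ℝ) r,
      ENNReal.ofReal ((2*((m:ℝ)+1)*s^m*(r^(m+1))⁻¹) * (1-s^2) ^ (-(α/2)))
      ≤ ENNReal.ofReal (2 * (1-r^2) ^ (-(α/2))) := by
  set c : ℝ := -(α/2) with hc
  set g : ℝ → ℝ := fun s => (2*((m:ℝ)+1)*s^m*(r^(m+1))⁻¹) * (1-s^2) ^ c with hgdef
  have hrm : (0:ℝ) < r^(m+1) := pow_pos hr0 _
  have hne : ∀ x ∈ Icc (0:ℝ) r, 1 - x^2 ≠ 0 := by
    intro x hx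
    have : x^2 < 1 := by nlinarith [hx.1, hx.2]
    exact ne_of_gt (by linarith)
  have hpos : ∀ x ∈ Icc (0:ℝ) r, (0:ℝ) < 1 - x^2 := by
    intro x hx
    have : x^2 < 1 := by nlinarith [hx.1, hx.2]
    linarith
  -- continuity of g on Icc 0 r
  have hgcont : ContinuousOn g (Icc 0 r) := by
    apply ContinuousOn.mul (Continuous.continuousOn (by fun_prop))
    exact ContinuousOn.rpow_const
      (Continuous.continuousOn (by fun_prop)) (fun x hx => Or.inl (hne x hx))
  have hgint : IntervalIntegrable g volume 0 r := by
    apply ContinuousOn.intervalIntegrable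
    rwa [uIcc_of_le hr0.le]
  -- antiderivative
  set F : ℝ → ℝ := fun s => 2*(r^(m+1))⁻¹ * (s^(m+1) * (1-s^2) ^ c) with hFdef
  set F' : ℝ → ℝ := fun s =>
    2*(r^(m+1))⁻¹ * ((((m:ℝ)+1) * s^m) * (1-s^2) ^ c
      + s^(m+1) * ((-(2*s)) * c * (1-s^2)^(c-1))) with hF'def
  have hder : ∀ x ∈ uIcc (0:ℝ) r, HasDerivAt F (F' x) x := by
    intro x hx
    rw [uIcc_of_le hr0.le] at hx
    have h1 : HasDerivAt (fun y : ℝ => 1 - y^2) (-(2*x)) x := by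
      simpa using ((hasDerivAt_pow 2 x).const_sub 1)
    have h2 : HasDerivAt (fun y : ℝ => (1-y^2) ^ c) ((-(2*x)) * c * (1-x^2)^(c-1)) x :=
      h1.rpow_const (Or.inl (hne x hx))
    have h3 : HasDerivAt (fun y : ℝ => y^(m+1)) (((m:ℝ)+1) * x^m) x := by
      simpa using hasDerivAt_pow (m+1) x
    have h4 := (h3.mul h2).const_mul (2*(r^(m+1))⁻¹)
    convert h4 using 1
    try simp only [hF'def]
    try ring
    all_goals rfl
  have hF'cont : ContinuousOn F' (Icc 0 r) := by
    apply ContinuousOn.mul continuousOn_const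
    apply ContinuousOn.add
    · exact ContinuousOn.mul (Continuous.continuousOn (by fun_prop))
        (ContinuousOn.rpow_const (Continuous.continuousOn (by fun_prop))
          (fun x hx => Or.inl (hne x hx)))
    · exact ContinuousOn.mul (Continuous.continuousOn (by fun_prop))
        (ContinuousOn.mul (Continuous.continuousOn (by fun_prop))
          (ContinuousOn.rpow_const (Continuous.continuousOn (by fun_prop))
            (fun x hx => Or.inl (hne x hx))))
  have hF'int : IntervalIntegrable F' volume 0 r := by
    apply ContinuousOn.intervalIntegrable
    rwa [uIcc_of_le hr0.le]
  have hcmp : ∀ x ∈ Icc (0:ℝ) r, g x ≤ F' x := by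
    intro x hx
    have hid : F' x = g x + 2*(r^(m+1))⁻¹ * (x^(m+1) * (α * x * (1-x^2)^(c-1))) := by
      simp only [hF'def, hgdef, hc]
      ring
    have hnn : (0:ℝ) ≤ 2*(r^(m+1))⁻¹ * (x^(m+1) * (α * x * (1-x^2)^(c-1))) := by
      have hx0 := hx.1
      have : (0:ℝ) ≤ (1-x^2)^(c-1) := Real.rpow_nonneg (by nlinarith [hx.2] : (0:ℝ) ≤ 1-x^2) _
      positivity
    linarith
  have hFTC : ∫ x in (0:ℝ)..r, F' x = F r - F 0 :=
    intervalIntegral.integral_eq_sub_of_hasDerivAt hder hF'int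
  have hFr : F r - F 0 = 2 * (1-r^2) ^ c := by
    simp only [hFdef]
    rw [zero_pow (Nat.succ_ne_zero m)]
    field_simp
    ring
  -- now put together
  have hgnn : ∀ᵐ x ∂(volume.restrict (Ioo (0:ℝ) r)), 0 ≤ g x := by
    rw [ae_restrict_iff' measurableSet_Ioo]
    apply ae_of_all
    intro x hx
    have : (0:ℝ) ≤ (1-x^2) ^ c := Real.rpow_nonneg (by nlinarith [hx.1, hx.2] : (0:ℝ) ≤ 1-x^2) _
    have hx0 := hx.1
    positivity
  have hgint' : IntegrableOn g (Ioo 0 r) := by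
    have h := (hgcont.integrableOn_Icc : IntegrableOn g (Icc 0 r) volume)
    exact h.mono_set Ioo_subset_Icc_self
  calc ∫⁻ s in Ioo (0:ℝ) r, ENNReal.ofReal ((2*((m:ℝ)+1)*s^m*(r^(m+1))⁻¹) * (1-s^2) ^ (-(α/2)))
      = ENNReal.ofReal (∫ s in Ioo (0:ℝ) r, g s) := 
        (ofReal_integral_eq_lintegral_ofReal hgint' hgnn).symm
    _ ≤ ENNReal.ofReal (2 * (1-r^2) ^ c) := by
        apply ENNReal.ofReal_le_ofReal
        have h1 : ∫ s in Ioo (0:ℝ) r, g s = ∫ x in (0:ℝ)..r, g x := by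
          rw [intervalIntegral.integral_of_le hr0.le, integral_Ioc_eq_integral_Ioo]
        rw [h1, ← hFr, ← hFTC]
        exact intervalIntegral.integral_mono_on hr0.le hgint hF'int hcmp

lemma aux_measurable_rpow_const (c : ℝ) : Measurable fun x : ℝ => x ^ c :=
  measurable_of_measurable_on_compl_singleton 0 <| Continuous.measurable <|
    continuousOn_iff_continuous_restrict.1 <| fun x hx =>
      (Real.continuousAt_rpow_const x c (Or.inl hx)).continuousWithinAt

set_option maxHeartbeats 2000000 in
lemma auxL1 {α : ℝ} (hα0 : 0 < α) (hα1 : α < 1) (m : ℕ) {s : ℝ} (hs0 : 0 < s) (hs1 : s < 1) :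
    ∫⁻ r in Ioo s (1:ℝ),
      ENNReal.ofReal ((2*((m:ℝ)+1)*s^m*(r^(m+1))⁻¹) * (r⁻¹ * (1-r^2) ^ (-(1-α/2))))
      ≤ ENNReal.ofReal ((8/α) * (s⁻¹ * (1-s^2) ^ (-(1-α/2)))) := by
  set b : ℝ := -(1-α/2) with hbdef
  have hb0 : b ≤ 0 := by simp only [hbdef]; linarith
  have hbneg1 : -b ≤ 1 := by simp only [hbdef]; linarith
  have hb' : b = α/2 - 1 := by simp only [hbdef]; ring
  set g₁ : ℝ → ℝ := fun r => (2*((m:ℝ)+1)*s^m*(r^(m+2))⁻¹) * (1-r) ^ b with hg1def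
  have hsm : (0:ℝ) ≤ s^m := by positivity
  -- Step 1 : pointwise domination
  have step1 : ∫⁻ r in Ioo s (1:ℝ),
      ENNReal.ofReal ((2*((m:ℝ)+1)*s^m*(r^(m+1))⁻¹) * (r⁻¹ * (1-r^2) ^ (-(1-α/2))))
      ≤ ∫⁻ r in Ioo s (1:ℝ), ENNReal.ofReal (g₁ r) := by
    apply lintegral_mono_ae
    rw [ae_restrict_iff' measurableSet_Ioo]
    apply ae_of_all
    intro r hr
    apply ENNReal.ofReal_le_ofReal
    have hr0 : 0 < r := lt_trans hs0 hr.1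
    have hr1 : r < 1 := hr.2
    have hco : (2*((m:ℝ)+1)*s^m*(r^(m+1))⁻¹) * r⁻¹ = 2*((m:ℝ)+1)*s^m*(r^(m+2))⁻¹ := by
      rw [show m+2 = (m+1)+1 from rfl, pow_succ, mul_inv]
      ring
    have hrp : (1-r^2) ^ b ≤ (1-r) ^ b := by
      apply Real.rpow_le_rpow_of_nonpos (by linarith) (by nlinarith) hb0
    calc (2*((m:ℝ)+1)*s^m*(r^(m+1))⁻¹) * (r⁻¹ * (1-r^2) ^ (-(1-α/2)))
        = ((2*((m:ℝ)+1)*s^m*(r^(m+1))⁻¹) * r⁻¹) * (1-r^2) ^ b := by rw [← hbdef]; ring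
      _ = (2*((m:ℝ)+1)*s^m*(r^(m+2))⁻¹) * (1-r^2) ^ b := by rw [hco]
      _ ≤ (2*((m:ℝ)+1)*s^m*(r^(m+2))⁻¹) * (1-r) ^ b := by
          apply mul_le_mul_of_nonneg_left hrp
          positivity
  refine le_trans step1 ?_
  -- the sup bound
  set Hs : ℝ := (4*s^m/α) * (((s^(m+1))⁻¹ - 1) * (1-s) ^ b) with hHsdef
  have hmeas : Measurable (fun r : ℝ => ENNReal.ofReal (g₁ r)) := by
    apply ENNReal.measurable_ofReal.comp
    exact (measurable_const.mul ((measurable_id.pow_const (m+2)).inv)).mul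
      ((aux_measurable_rpow_const b).comp (measurable_const.sub measurable_id))
  have step2 : ∫⁻ r in Ioo s (1:ℝ), ENNReal.ofReal (g₁ r) ≤ ENNReal.ofReal Hs := by
    apply lintegral_Ioo_lim hs1 _ hmeas
    intro t hst ht1
    -- FTC bound on [s,t]
    have hIcc : ∀ x ∈ Icc s t, 0 < x ∧ x < 1 := by
      intro x hx
      exact ⟨lt_of_lt_of_le hs0 hx.1, lt_of_le_of_lt hx.2 ht1⟩
    set H : ℝ → ℝ := fun x => (4*s^m/α) * (((x^(m+1))⁻¹ - 1) * (1-x) ^ b) with hHdef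
    set Hd : ℝ → ℝ := fun x => (4*s^m/α) *
      ((-((((m:ℝ)+1)) * x^m) / (x^(m+1))^2) * (1-x) ^ b
        + ((x^(m+1))⁻¹ - 1) * ((-1) * b * (1-x)^(b-1))) with hHddef
    have hder : ∀ x ∈ uIcc s t, HasDerivAt H (Hd x) x := by
      intro x hx
      rw [uIcc_of_le hst.le] at hx
      obtain ⟨hx0, hx1⟩ := hIcc x hx
      have h3 : HasDerivAt (fun y : ℝ => y^(m+1)) (((m:ℝ)+1) * x^m) x := by
        simpa using hasDerivAt_pow (m+1) x
      have hinv := (h3.inv (pow_ne_zero _ hx0.ne')).sub_const 1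
      have h1 : HasDerivAt (fun y : ℝ => 1 - y) (-1) x := by
        simpa using (hasDerivAt_id x).const_sub 1
      have h2 : HasDerivAt (fun y : ℝ => (1-y) ^ b) ((-1) * b * (1-x)^(b-1)) x :=
        h1.rpow_const (Or.inl (by linarith : (1:ℝ)-x ≠ 0))
      have h4 := (hinv.mul h2).const_mul (4*s^m/α)
      convert h4 using 1
      try simp only [hHddef]
      try ring
      all_goals rfl
    have hHdcont : ContinuousOn Hd (Icc s t) := by
      apply ContinuousOn.mul continuousOn_const
      apply ContinuousOn.add
      · apply ContinuousOn.mul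
        · apply ContinuousOn.div (by fun_prop)
          · exact (Continuous.continuousOn (by fun_prop))
          · intro x hx
            have := (hIcc x hx).1
            positivity
        · exact ContinuousOn.rpow_const (Continuous.continuousOn (by fun_prop))
            (fun x hx => Or.inl (by linarith [(hIcc x hx).2] : (1:ℝ)-x ≠ 0))
      · apply ContinuousOn.mul
        · apply ContinuousOn.sub _ continuousOn_const
          apply ContinuousOn.inv₀ (Continuous.continuousOn (by fun_prop))
          intro x hx
          have := (hIcc x hx).1
          positivity
        · apply ContinuousOn.mul continuousOn_const
          exact ContinuousOn.rpow_const (Continuous.continuousOn (by fun_prop))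
            (fun x hx => Or.inl (by linarith [(hIcc x hx).2] : (1:ℝ)-x ≠ 0))
    have hg1cont : ContinuousOn g₁ (Icc s t) := by
      apply ContinuousOn.mul
      · apply ContinuousOn.mul continuousOn_const
        apply ContinuousOn.inv₀ (Continuous.continuousOn (by fun_prop))
        intro x hx
        have := (hIcc x hx).1
        positivity
      · exact ContinuousOn.rpow_const (Continuous.continuousOn (by fun_prop))
          (fun x hx => Or.inl (by linarith [(hIcc x hx).2] : (1:ℝ)-x ≠ 0))
    have hg1int : IntervalIntegrable g₁ volume s t := by
      apply ContinuousOn.intervalIntegrable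
      rwa [uIcc_of_le hst.le]
    have hHdint : IntervalIntegrable Hd volume s t := by
      apply ContinuousOn.intervalIntegrable
      rwa [uIcc_of_le hst.le]
    have hcmp : ∀ x ∈ Icc s t, g₁ x ≤ -Hd x := by
      intro x hx
      obtain ⟨hx0, hx1⟩ := hIcc x hx
      have h1x : (0:ℝ) < 1 - x := by linarith
      have hA : x^(m+1) ≠ 0 := pow_ne_zero _ hx0.ne'
      have hA2 : x^(m+2) ≠ 0 := pow_ne_zero _ hx0.ne'
      have hQpos : (0:ℝ) < (1-x) ^ b := Real.rpow_pos_of_pos h1x b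
      have hQ1 : (1-x)^(b-1) = (1-x)^b / (1-x) := by
        rw [Real.rpow_sub h1x, Real.rpow_one]
      -- key geometric inequality
      have hw : (0:ℝ) < (x^(m+2))⁻¹ := by positivity
      have hgeom := aux_geom m hx0.le hx1.le
      have hgeomw : (x * (x^(m+2))⁻¹ - 1) ≤ ((m:ℝ)+1) * (x^(m+2))⁻¹ * (1-x) := by
        have h5 : x * (1 - x^(m+1)) * (x^(m+2))⁻¹ ≤ ((m:ℝ)+1) * (1-x) * (x^(m+2))⁻¹ :=
          mul_le_mul_of_nonneg_right hgeom hw.le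
        have h6 : x * (1 - x^(m+1)) * (x^(m+2))⁻¹ = x * (x^(m+2))⁻¹ - 1 := by
          field_simp
          ring
        nlinarith [h5, h6]
      -- coefficient inequality
      have hα2 : (0:ℝ) ≤ 4/α - 2 := by
        have : (2:ℝ) ≤ 4/α := by
          rw [le_div_iff₀ hα0]; linarith
        linarith
      set L : ℝ := 2*((m:ℝ)+1)*s^m*(x^(m+2))⁻¹ with hLdef
      set R : ℝ := (4*s^m/α) * (((m:ℝ)+1)*x^m/(x^(m+1))^2 + ((x^(m+1))⁻¹ - 1) * b / (1-x))
        with hRdef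
      have hclaim : L ≤ R := by
        have hId : R - L = s^m * (4/α - 2) *
            ((((m:ℝ)+1)*(x^(m+2))⁻¹*(1-x) - (x*(x^(m+2))⁻¹ - 1)) / (1-x)) := by
          simp only [hRdef, hLdef, hb']
          field_simp
          ring
        have hnum : (0:ℝ) ≤ (((m:ℝ)+1)*(x^(m+2))⁻¹*(1-x) - (x*(x^(m+2))⁻¹ - 1)) := by
          linarith [hgeomw]
        have : (0:ℝ) ≤ R - L := by
          rw [hId]
          positivity
        linarith
      have hgL : g₁ x = L * ((1-x)^b) := by
        simp only [hg1def, hLdef]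
      have hHdR : -Hd x = R * ((1-x)^b) := by
        simp only [hHddef, hRdef]
        rw [hQ1]
        field_simp
        ring
      rw [hgL, hHdR]
      exact mul_le_mul_of_nonneg_right hclaim hQpos.le
    have hFTC : ∫ x in s..t, Hd x = H t - H s :=
      intervalIntegral.integral_eq_sub_of_hasDerivAt hder hHdint
    have hHt : 0 ≤ H t := by
      simp only [hHdef]
      have h1 : t^(m+1) ≤ 1 := pow_le_one₀ (by linarith) ht1.le
      have h2 : (0:ℝ) < t^(m+1) := pow_pos (by linarith) _
      have h3 : (1:ℝ) ≤ (t^(m+1))⁻¹ := (one_le_inv_iff₀.2 ⟨h2, h1⟩ : _)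
      have h4 : (0:ℝ) ≤ (1-t) ^ b := Real.rpow_nonneg (by linarith) _
      have h5 : (0:ℝ) ≤ 4*s^m/α := by positivity
      have h6 := mul_nonneg h5 (mul_nonneg (by linarith : (0:ℝ) ≤ (t^(m+1))⁻¹ - 1) h4)
      linarith
    -- assemble
    have hg1nn : ∀ᵐ x ∂(volume.restrict (Ioo s t)), 0 ≤ g₁ x := by
      rw [ae_restrict_iff' measurableSet_Ioo]
      apply ae_of_all
      intro x hx
      have hx0 : (0:ℝ) < x := lt_trans hs0 hx.1
      have h4 : (0:ℝ) ≤ (1-x) ^ b := Real.rpow_nonneg (by linarith [hx.2, ht1]) _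
      simp only [hg1def]
      positivity
    have hg1int' : IntegrableOn g₁ (Ioo s t) := by
      have h := (hg1cont.integrableOn_Icc : IntegrableOn g₁ (Icc s t) volume)
      exact h.mono_set Ioo_subset_Icc_self
    calc ∫⁻ r in Ioo s t, ENNReal.ofReal (g₁ r)
        = ENNReal.ofReal (∫ r in Ioo s t, g₁ r) :=
          (ofReal_integral_eq_lintegral_ofReal hg1int' hg1nn).symm
      _ ≤ ENNReal.ofReal Hs := by
          apply ENNReal.ofReal_le_ofReal
          have h1 : ∫ r in Ioo s t, g₁ r = ∫ x in s..t, g₁ x := by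
            rw [intervalIntegral.integral_of_le hst.le, integral_Ioc_eq_integral_Ioo]
          have h2 : ∫ x in s..t, g₁ x ≤ ∫ x in s..t, (fun y => -Hd y) x :=
            intervalIntegral.integral_mono_on hst.le hg1int hHdint.neg hcmp
          have h3 : ∫ x in s..t, (fun y => -Hd y) x = H s - H t := by
            rw [intervalIntegral.integral_neg, hFTC]
            ring
          have : Hs = H s := by simp only [hHsdef, hHdef]
          rw [h1, this]
          linarith
  refine le_trans step2 ?_
  -- Step 3 : Hs ≤ 8/α * (s⁻¹ * (1-s²)^b)
  apply ENNReal.ofReal_le_ofReal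
  have hsmne : s^m ≠ 0 := by positivity
  have ha1 : s^m * ((s^(m+1))⁻¹ - 1) ≤ s⁻¹ := by
    have h1 : s^m * (s^(m+1))⁻¹ = s⁻¹ := by
      rw [pow_succ, mul_inv]
      field_simp
    have h2 : (0:ℝ) ≤ s^m := hsm
    calc s^m * ((s^(m+1))⁻¹ - 1) = s^m * (s^(m+1))⁻¹ - s^m := by ring
      _ ≤ s⁻¹ := by rw [h1]; linarith
  have ha0 : (0:ℝ) ≤ s^m * ((s^(m+1))⁻¹ - 1) := by
    have h1 : s^(m+1) ≤ 1 := pow_le_one₀ hs0.le hs1.le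
    have h2 : (0:ℝ) < s^(m+1) := pow_pos hs0 _
    have h3 : (1:ℝ) ≤ (s^(m+1))⁻¹ := one_le_inv_iff₀.2 ⟨h2, h1⟩
    exact mul_nonneg hsm (by linarith)
  have hs2 : (0:ℝ) < 1 - s^2 := by nlinarith
  have hb1 : (1-s) ^ b ≤ 2 * (1-s^2) ^ b := by
    have h1 : (1-s^2) * (1/2) ≤ 1-s := by nlinarith
    have h2 : (1-s)^b ≤ ((1-s^2) * (1/2))^b :=
      Real.rpow_le_rpow_of_nonpos (by positivity) h1 hb0
    have h3 : ((1-s^2) * (1/2):ℝ)^b = (1-s^2)^b * ((1/2:ℝ))^b :=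
      Real.mul_rpow hs2.le (by norm_num)
    have h4 : ((1/2:ℝ))^b = ((2:ℝ))^(-b) := by
      rw [show (1/2:ℝ) = (2:ℝ)⁻¹ by norm_num, ← Real.rpow_neg_one,
        ← Real.rpow_mul (by norm_num : (0:ℝ) ≤ 2)]
      ring_nf
    have h5 : ((2:ℝ))^(-b) ≤ 2 := by
      calc ((2:ℝ))^(-b) ≤ ((2:ℝ))^(1:ℝ) := Real.rpow_le_rpow_of_exponent_le (by norm_num) hbneg1
        _ = 2 := Real.rpow_one 2
    have h6 : (0:ℝ) ≤ (1-s^2)^b := Real.rpow_nonneg hs2.le _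
    calc (1-s)^b ≤ (1-s^2)^b * ((2:ℝ))^(-b) := by rw [← h4, ← h3]; exact h2
      _ ≤ (1-s^2)^b * 2 := mul_le_mul_of_nonneg_left h5 h6
      _ = 2 * (1-s^2)^b := by ring
  have hb2 : (0:ℝ) ≤ (1-s) ^ b := Real.rpow_nonneg (by linarith) _
  calc Hs = (4/α) * ((s^m*((s^(m+1))⁻¹ - 1)) * (1-s)^b) := by
        simp only [hHsdef]; ring
    _ ≤ (4/α) * (s⁻¹ * (2*(1-s^2)^b)) := by
        apply mul_le_mul_of_nonneg_left _ (by positivity)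
        apply mul_le_mul ha1 hb1 hb2 (by positivity)
    _ = (8/α) * (s⁻¹ * (1-s^2) ^ (-(1-α/2))) := by
        rw [← hbdef]; ring

lemma aux_ite_right (g : ℝ → ℝ≥0∞) (s : ℝ) (T : Set ℝ) :
    ∫⁻ r in T, (if s < r then g r else 0) = ∫⁻ r in Ioi s ∩ T, g r := by
  have h : ∀ r, (if s < r then g r else 0) = (Ioi s).indicator g r := by
    intro r; simp [Set.indicator_apply, mem_Ioi]
  simp_rw [h]
  rw [lintegral_indicator measurableSet_Ioi, Measure.restrict_restrict measurableSet_Ioi]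

lemma aux_ite_left (g : ℝ → ℝ≥0∞) (r : ℝ) (T : Set ℝ) :
    ∫⁻ s in T, (if s < r then g s else 0) = ∫⁻ s in Iio r ∩ T, g s := by
  have h : ∀ s, (if s < r then g s else 0) = (Iio r).indicator g s := by
    intro s; simp [Set.indicator_apply, mem_Iio]
  simp_rw [h]
  rw [lintegral_indicator measurableSet_Iio, Measure.restrict_restrict measurableSet_Iio]

lemma aux_inter_right {s : ℝ} (hs : s ∈ Ioo (0:ℝ) 1) : Ioi s ∩ Ioo (0:ℝ) 1 = Ioo s 1 := by
  ext r; simp only [mem_inter_iff, mem_Ioi, mem_Ioo]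
  exact ⟨fun ⟨h1, _, h3⟩ => ⟨h1, h3⟩, fun ⟨h1, h2⟩ => ⟨h1, lt_trans hs.1 h1, h2⟩⟩

lemma aux_inter_left {r : ℝ} (hr : r ∈ Ioo (0:ℝ) 1) : Iio r ∩ Ioo (0:ℝ) 1 = Ioo 0 r := by
  ext s; simp only [mem_inter_iff, mem_Iio, mem_Ioo]
  exact ⟨fun ⟨h1, h2, _⟩ => ⟨h2, h1⟩, fun ⟨h1, h2⟩ => ⟨h2, h1, lt_trans h2 hr.2⟩⟩

lemma aux_rpow_half_sq (x : ℝ≥0∞) : (x ^ (1/2:ℝ)) ^ (2:ℕ) = x := by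
  rw [← ENNReal.rpow_natCast (x ^ (1/2:ℝ)) 2, ← ENNReal.rpow_mul]
  norm_num

lemma aux_rpow_half_sq' (x : ℝ≥0∞) : (x ^ (1/2:ℝ)) ^ (2:ℝ) = x := by
  rw [← ENNReal.rpow_mul]
  norm_num

lemma aux_rpow_two (x : ℝ≥0∞) : x ^ (2:ℝ) = x ^ (2:ℕ) := by
  rw [← ENNReal.rpow_natCast x 2]
  norm_num

set_option maxHeartbeats 1000000 in
lemma aux_CS {α : ℝ} (hα0 : 0 < α) (hα1 : α < 1) (m : ℕ) (G : ℝ → ℝ≥0∞) (hG : Measurable G)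
    {s : ℝ} (hs0 : 0 < s) (hs1 : s < 1) :
    (∫⁻ r in Ioo s (1:ℝ), ENNReal.ofReal (2*((m:ℝ)+1)*s^m*(r^(m+1))⁻¹) * G r) ^ (2:ℕ)
      ≤ ENNReal.ofReal ((8/α) * (s⁻¹ * (1-s^2) ^ (-(1-α/2)))) *
        ∫⁻ r in Ioo s (1:ℝ),
          ENNReal.ofReal ((2*((m:ℝ)+1)*s^m*(r^(m+1))⁻¹) *
            (r⁻¹ * (1-r^2) ^ (-(1-α/2)))⁻¹) * (G r)^(2:ℕ) := by
  classical
  set f₁ : ℝ → ℝ≥0∞ := fun r =>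
    ENNReal.ofReal ((2*((m:ℝ)+1)*s^m*(r^(m+1))⁻¹) * (r⁻¹ * (1-r^2) ^ (-(1-α/2)))) ^ (1/2:ℝ)
    with hf1
  set f₂ : ℝ → ℝ≥0∞ := fun r =>
    ENNReal.ofReal ((2*((m:ℝ)+1)*s^m*(r^(m+1))⁻¹) * (r⁻¹ * (1-r^2) ^ (-(1-α/2)))⁻¹) ^ (1/2:ℝ)
      * G r with hf2
  have hKm : Measurable fun r : ℝ => (2*((m:ℝ)+1)*s^m*(r^(m+1))⁻¹) :=
    measurable_const.mul ((measurable_id.pow_const (m+1)).inv)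
  have hhm : Measurable fun r : ℝ => (r⁻¹ * (1-r^2) ^ (-(1-α/2))) :=
    measurable_inv.mul
      ((aux_measurable_rpow_const _).comp (measurable_const.sub (measurable_id.pow_const 2)))
  have hf1m : Measurable f₁ :=
    (ENNReal.continuous_rpow_const.measurable).comp (ENNReal.measurable_ofReal.comp (hKm.mul hhm))
  have hf2m : Measurable f₂ :=
    ((ENNReal.continuous_rpow_const.measurable).comp
      (ENNReal.measurable_ofReal.comp (hKm.mul hhm.inv))).mul hG
  have hptw : ∀ r ∈ Ioo s (1:ℝ),
      ENNReal.ofReal (2*((m:ℝ)+1)*s^m*(r^(m+1))⁻¹) * G r = (f₁ * f₂) r := by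
    intro r hr
    have hr0 : 0 < r := lt_trans hs0 hr.1
    have hr1 : r < 1 := hr.2
    have hr2 : (0:ℝ) < 1 - r^2 := by nlinarith
    have hK0 : (0:ℝ) ≤ 2*((m:ℝ)+1)*s^m*(r^(m+1))⁻¹ := by positivity
    have hh0 : (0:ℝ) < r⁻¹ * (1-r^2) ^ (-(1-α/2)) := by
      have := Real.rpow_pos_of_pos hr2 (-(1-α/2))
      positivity
    have h1 : (f₁ * f₂) r = (f₁ r * ENNReal.ofReal ((2*((m:ℝ)+1)*s^m*(r^(m+1))⁻¹) *
        (r⁻¹ * (1-r^2) ^ (-(1-α/2)))⁻¹) ^ (1/2:ℝ)) * G r := by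
      simp only [Pi.mul_apply, hf1, hf2]
      ring
    rw [h1, hf1]
    have h2 : ENNReal.ofReal ((2*((m:ℝ)+1)*s^m*(r^(m+1))⁻¹) * (r⁻¹ * (1-r^2) ^ (-(1-α/2)))) ^ (1/2:ℝ)
        * ENNReal.ofReal ((2*((m:ℝ)+1)*s^m*(r^(m+1))⁻¹) * (r⁻¹ * (1-r^2) ^ (-(1-α/2)))⁻¹) ^ (1/2:ℝ)
        = ENNReal.ofReal (2*((m:ℝ)+1)*s^m*(r^(m+1))⁻¹) := by
      rw [← ENNReal.mul_rpow_of_nonneg _ _ (by norm_num : (0:ℝ) ≤ 1/2),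
        ← ENNReal.ofReal_mul (by positivity)]
      have h3 : ((2*((m:ℝ)+1)*s^m*(r^(m+1))⁻¹) * (r⁻¹ * (1-r^2) ^ (-(1-α/2)))) *
          ((2*((m:ℝ)+1)*s^m*(r^(m+1))⁻¹) * (r⁻¹ * (1-r^2) ^ (-(1-α/2)))⁻¹)
          = (2*((m:ℝ)+1)*s^m*(r^(m+1))⁻¹)^2 := by
        field_simp
      rw [h3, ENNReal.ofReal_rpow_of_nonneg (by positivity) (by norm_num : (0:ℝ) ≤ 1/2)]
      congr 1
      rw [← Real.rpow_natCast (2*((m:ℝ)+1)*s^m*(r^(m+1))⁻¹) 2, ← Real.rpow_mul hK0]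
      norm_num
    rw [h2]
  have hconj : (2:ℝ).HolderConjugate 2 := Real.holderConjugate_iff.mpr ⟨by norm_num, by norm_num⟩
  have hhold := ENNReal.lintegral_mul_le_Lp_mul_Lq (volume.restrict (Ioo s (1:ℝ))) hconj
    hf1m.aemeasurable hf2m.aemeasurable
  have heq1 : ∫⁻ r in Ioo s (1:ℝ), ENNReal.ofReal (2*((m:ℝ)+1)*s^m*(r^(m+1))⁻¹) * G r
      = ∫⁻ r in Ioo s (1:ℝ), (f₁ * f₂) r :=
    setLIntegral_congr_fun measurableSet_Ioo hptw
  have heq2 : ∫⁻ r in Ioo s (1:ℝ), f₁ r ^ (2:ℝ)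
      = ∫⁻ r in Ioo s (1:ℝ),
        ENNReal.ofReal ((2*((m:ℝ)+1)*s^m*(r^(m+1))⁻¹) * (r⁻¹ * (1-r^2) ^ (-(1-α/2)))) := by
    apply lintegral_congr
    intro r
    rw [hf1, aux_rpow_half_sq']
  have heq3 : ∫⁻ r in Ioo s (1:ℝ), f₂ r ^ (2:ℝ)
      = ∫⁻ r in Ioo s (1:ℝ),
        ENNReal.ofReal ((2*((m:ℝ)+1)*s^m*(r^(m+1))⁻¹) * (r⁻¹ * (1-r^2) ^ (-(1-α/2)))⁻¹)
          * (G r)^(2:ℕ) := by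
    apply lintegral_congr
    intro r
    rw [hf2, ENNReal.mul_rpow_of_nonneg _ _ (by norm_num : (0:ℝ) ≤ 2), aux_rpow_half_sq',
      aux_rpow_two]
  have hL1 := auxL1 hα0 hα1 m hs0 hs1
  -- combine
  have hmain : ∫⁻ r in Ioo s (1:ℝ), ENNReal.ofReal (2*((m:ℝ)+1)*s^m*(r^(m+1))⁻¹) * G r
      ≤ (ENNReal.ofReal ((8/α) * (s⁻¹ * (1-s^2) ^ (-(1-α/2))))) ^ (1/2:ℝ) *
        (∫⁻ r in Ioo s (1:ℝ),
          ENNReal.ofReal ((2*((m:ℝ)+1)*s^m*(r^(m+1))⁻¹) * (r⁻¹ * (1-r^2) ^ (-(1-α/2)))⁻¹)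
            * (G r)^(2:ℕ)) ^ (1/2:ℝ) := by
    rw [heq1]
    refine le_trans hhold ?_
    rw [heq2, heq3]
    have h4 : (∫⁻ r in Ioo s (1:ℝ),
        ENNReal.ofReal ((2*((m:ℝ)+1)*s^m*(r^(m+1))⁻¹) * (r⁻¹ * (1-r^2) ^ (-(1-α/2))))) ^ (1/(2:ℝ))
        ≤ (ENNReal.ofReal ((8/α) * (s⁻¹ * (1-s^2) ^ (-(1-α/2))))) ^ (1/2:ℝ) := by
      apply ENNReal.rpow_le_rpow _ (by norm_num)
      exact le_trans (le_of_eq (by norm_num)) hL1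
    exact mul_le_mul' h4 (le_of_eq (by norm_num))
  calc (∫⁻ r in Ioo s (1:ℝ), ENNReal.ofReal (2*((m:ℝ)+1)*s^m*(r^(m+1))⁻¹) * G r) ^ (2:ℕ)
      ≤ ((ENNReal.ofReal ((8/α) * (s⁻¹ * (1-s^2) ^ (-(1-α/2))))) ^ (1/2:ℝ) *
        (∫⁻ r in Ioo s (1:ℝ),
          ENNReal.ofReal ((2*((m:ℝ)+1)*s^m*(r^(m+1))⁻¹) * (r⁻¹ * (1-r^2) ^ (-(1-α/2)))⁻¹)
            * (G r)^(2:ℕ)) ^ (1/2:ℝ)) ^ (2:ℕ) := pow_le_pow_left' hmain 2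
    _ = ENNReal.ofReal ((8/α) * (s⁻¹ * (1-s^2) ^ (-(1-α/2)))) *
        ∫⁻ r in Ioo s (1:ℝ),
          ENNReal.ofReal ((2*((m:ℝ)+1)*s^m*(r^(m+1))⁻¹) *
            (r⁻¹ * (1-r^2) ^ (-(1-α/2)))⁻¹) * (G r)^(2:ℕ) := by
        rw [mul_pow, aux_rpow_half_sq, aux_rpow_half_sq]

set_option maxHeartbeats 2000000 in
lemma aux_schur {α : ℝ} (hα0 : 0 < α) (hα1 : α < 1) (m : ℕ) (G : ℝ → ℝ≥0∞)
    (hG : Measurable G) (hGfin : ∀ r, G r ≠ ⊤) :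
    ∫⁻ s in Ioo (0:ℝ) 1,
        (∫⁻ r in Ioo (0:ℝ) 1,
          (if s < r then ENNReal.ofReal (2*((m:ℝ)+1)*s^m*(r^(m+1))⁻¹) * G r else 0))^(2:ℕ)
          * ENNReal.ofReal ((1-s^2) ^ (1-α) * s)
      ≤ ENNReal.ofReal (16/α) *
        ∫⁻ r in Ioo (0:ℝ) 1, (G r)^(2:ℕ) * ENNReal.ofReal ((1-r^2) ^ (1-α) * r) := by
  classical
  set Ψ : ℝ → ℝ≥0∞ := fun s => ∫⁻ r in Ioo (0:ℝ) 1,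
    (if s < r then
      ENNReal.ofReal ((2*((m:ℝ)+1)*s^m*(r^(m+1))⁻¹) * (r⁻¹ * (1-r^2) ^ (-(1-α/2)))⁻¹)
        * (G r)^(2:ℕ) else 0) with hΨdef
  -- Step 1 : pointwise Cauchy-Schwarz
  have step1 : ∫⁻ s in Ioo (0:ℝ) 1,
      (∫⁻ r in Ioo (0:ℝ) 1,
        (if s < r then ENNReal.ofReal (2*((m:ℝ)+1)*s^m*(r^(m+1))⁻¹) * G r else 0))^(2:ℕ)
        * ENNReal.ofReal ((1-s^2) ^ (1-α) * s)
      ≤ ∫⁻ s in Ioo (0:ℝ) 1,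
        (ENNReal.ofReal ((8/α) * (s⁻¹ * (1-s^2) ^ (-(1-α/2)))) * Ψ s)
          * ENNReal.ofReal ((1-s^2) ^ (1-α) * s) := by
    apply lintegral_mono_ae
    rw [ae_restrict_iff' measurableSet_Ioo]
    apply ae_of_all
    intro s hs
    apply mul_le_mul' _ le_rfl
    have h1 : ∫⁻ r in Ioo (0:ℝ) 1,
        (if s < r then ENNReal.ofReal (2*((m:ℝ)+1)*s^m*(r^(m+1))⁻¹) * G r else 0)
        = ∫⁻ r in Ioo s (1:ℝ), ENNReal.ofReal (2*((m:ℝ)+1)*s^m*(r^(m+1))⁻¹) * G r := by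
      rw [aux_ite_right, aux_inter_right hs]
    have h2 : Ψ s = ∫⁻ r in Ioo s (1:ℝ),
        ENNReal.ofReal ((2*((m:ℝ)+1)*s^m*(r^(m+1))⁻¹) * (r⁻¹ * (1-r^2) ^ (-(1-α/2)))⁻¹)
          * (G r)^(2:ℕ) := by
      simp only [hΨdef]
      rw [aux_ite_right, aux_inter_right hs]
    rw [h1, h2]
    exact aux_CS hα0 hα1 m G hG hs.1 hs.2
  refine le_trans step1 ?_
  -- Step 2 : rearrange into iterated integral of a joint kernel
  set Q : ℝ → ℝ → ℝ≥0∞ := fun s r =>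
    ENNReal.ofReal ((2*((m:ℝ)+1)*s^m*(r^(m+1))⁻¹) * (r⁻¹ * (1-r^2) ^ (-(1-α/2)))⁻¹
      * ((1-s^2) ^ (-(α/2)))) * (G r)^(2:ℕ) with hQdef
  have step2 : ∫⁻ s in Ioo (0:ℝ) 1,
      (ENNReal.ofReal ((8/α) * (s⁻¹ * (1-s^2) ^ (-(1-α/2)))) * Ψ s)
        * ENNReal.ofReal ((1-s^2) ^ (1-α) * s)
      = ENNReal.ofReal (8/α) * ∫⁻ s in Ioo (0:ℝ) 1,
          ∫⁻ r in Ioo (0:ℝ) 1, (if s < r then Q s r else 0) := by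
    rw [← lintegral_const_mul' _ _ ENNReal.ofReal_ne_top]
    apply setLIntegral_congr_fun measurableSet_Ioo
    intro s hs
    have hs2 : (0:ℝ) < 1 - s^2 := by nlinarith [hs.1, hs.2]
    have hsp : (0:ℝ) ≤ s⁻¹ * (1-s^2) ^ (-(1-α/2)) := by
      have := Real.rpow_nonneg hs2.le (-(1-α/2))
      have := hs.1
      positivity
    have e1 : ENNReal.ofReal ((8/α) * (s⁻¹ * (1-s^2) ^ (-(1-α/2))))
        = ENNReal.ofReal (8/α) * ENNReal.ofReal (s⁻¹ * (1-s^2) ^ (-(1-α/2))) :=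
      ENNReal.ofReal_mul (by positivity)
    have e2 : ENNReal.ofReal (s⁻¹ * (1-s^2) ^ (-(1-α/2)))
        * ENNReal.ofReal ((1-s^2) ^ (1-α) * s)
        = ENNReal.ofReal ((1-s^2) ^ (-(α/2))) := by
      rw [← ENNReal.ofReal_mul hsp]
      congr 1
      have hchain : s⁻¹ * (1-s^2) ^ (-(1-α/2)) * ((1-s^2) ^ (1-α) * s)
          = ((1-s^2) ^ (-(1-α/2)) * (1-s^2) ^ (1-α)) * (s⁻¹ * s) := by ring
      rw [hchain, ← Real.rpow_add hs2, inv_mul_cancel₀ (ne_of_gt hs.1), mul_one]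
      congr 1
      ring
    have e3 : Ψ s * ENNReal.ofReal ((1-s^2) ^ (-(α/2)))
        = ∫⁻ r in Ioo (0:ℝ) 1, (if s < r then Q s r else 0) := by
      simp only [hΨdef]
      rw [← lintegral_mul_const' _ _ ENNReal.ofReal_ne_top]
      apply setLIntegral_congr_fun measurableSet_Ioo
      intro r hr
      by_cases hsr : s < r
      · simp only [hsr, if_true]
        have hr2 : (0:ℝ) < 1 - r^2 := by nlinarith [hr.1, hr.2]
        have hK0 : (0:ℝ) ≤ (2*((m:ℝ)+1)*s^m*(r^(m+1))⁻¹) * (r⁻¹ * (1-r^2) ^ (-(1-α/2)))⁻¹ := by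
          have h5 : (0:ℝ) < r⁻¹ * (1-r^2) ^ (-(1-α/2)) := by
            have := Real.rpow_pos_of_pos hr2 (-(1-α/2))
            have := hr.1
            positivity
          have h6 : (0:ℝ) ≤ 2*((m:ℝ)+1)*s^m*(r^(m+1))⁻¹ := by
            have := hs.1
            have := hr.1
            positivity
          positivity
        rw [hQdef]
        simp only []
        rw [ENNReal.ofReal_mul hK0]
        ring
      · simp only [hsr, if_false, zero_mul]
    calc ENNReal.ofReal ((8/α) * (s⁻¹ * (1-s^2) ^ (-(1-α/2)))) * Ψ s
          * ENNReal.ofReal ((1-s^2) ^ (1-α) * s)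
        = ENNReal.ofReal (8/α) * (Ψ s * (ENNReal.ofReal (s⁻¹ * (1-s^2) ^ (-(1-α/2)))
            * ENNReal.ofReal ((1-s^2) ^ (1-α) * s))) := by rw [e1]; ring
      _ = ENNReal.ofReal (8/α) * (Ψ s * ENNReal.ofReal ((1-s^2) ^ (-(α/2)))) := by rw [e2]
      _ = ENNReal.ofReal (8/α) * ∫⁻ r in Ioo (0:ℝ) 1, (if s < r then Q s r else 0) := by rw [e3]
  rw [step2]
  -- Step 3 : swap the integrals
  have hmeasQ : Measurable (Function.uncurry fun s r => (if s < r then Q s r else 0)) := by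
    apply Measurable.ite (measurableSet_lt measurable_fst measurable_snd) _ measurable_const
    have hA : Measurable fun p : ℝ × ℝ => 2*((m:ℝ)+1)*p.1^m*(p.2^(m+1))⁻¹ :=
      (measurable_const.mul (measurable_fst.pow_const m)).mul
        ((measurable_snd.pow_const (m+1)).inv)
    have hB : Measurable fun p : ℝ × ℝ => (p.2⁻¹ * (1-p.2^2) ^ (-(1-α/2)))⁻¹ :=
      (measurable_snd.inv.mul ((aux_measurable_rpow_const _).comp
        (measurable_const.sub (measurable_snd.pow_const 2)))).inv
    have hC : Measurable fun p : ℝ × ℝ => (1-p.1^2) ^ (-(α/2)) :=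
      (aux_measurable_rpow_const _).comp (measurable_const.sub (measurable_fst.pow_const 2))
    exact (ENNReal.measurable_ofReal.comp ((hA.mul hB).mul hC)).mul
      ((hG.comp measurable_snd).pow_const 2)
  rw [lintegral_lintegral_swap hmeasQ.aemeasurable]
  -- Step 4 : inner bound via auxL2
  have step4 : ∀ r ∈ Ioo (0:ℝ) 1, ∫⁻ s in Ioo (0:ℝ) 1, (if s < r then Q s r else 0)
      ≤ ENNReal.ofReal 2 * ((G r)^(2:ℕ) * ENNReal.ofReal ((1-r^2) ^ (1-α) * r)) := by
    intro r hr
    have hr2 : (0:ℝ) < 1 - r^2 := by nlinarith [hr.1, hr.2]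
    have hhr : (0:ℝ) < r⁻¹ * (1-r^2) ^ (-(1-α/2)) := by
      have := Real.rpow_pos_of_pos hr2 (-(1-α/2))
      have := hr.1
      positivity
    have h1 : ∫⁻ s in Ioo (0:ℝ) 1, (if s < r then Q s r else 0) = ∫⁻ s in Ioo (0:ℝ) r, Q s r := by
      rw [aux_ite_left, aux_inter_left hr]
    rw [h1]
    have hfin : (G r)^(2:ℕ) * ENNReal.ofReal ((r⁻¹ * (1-r^2) ^ (-(1-α/2)))⁻¹) ≠ ⊤ :=
      ENNReal.mul_ne_top (ENNReal.pow_ne_top (hGfin r)) ENNReal.ofReal_ne_top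
    have h2 : ∫⁻ s in Ioo (0:ℝ) r, Q s r
        = ((G r)^(2:ℕ) * ENNReal.ofReal ((r⁻¹ * (1-r^2) ^ (-(1-α/2)))⁻¹)) *
          ∫⁻ s in Ioo (0:ℝ) r,
            ENNReal.ofReal ((2*((m:ℝ)+1)*s^m*(r^(m+1))⁻¹) * (1-s^2) ^ (-(α/2))) := by
      rw [← lintegral_const_mul' _ _ hfin]
      apply setLIntegral_congr_fun measurableSet_Ioo
      intro s hs
      have hK0 : (0:ℝ) ≤ 2*((m:ℝ)+1)*s^m*(r^(m+1))⁻¹ := by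
        have := hs.1
        have := hr.1
        positivity
      have hB0 : (0:ℝ) ≤ (r⁻¹ * (1-r^2) ^ (-(1-α/2)))⁻¹ := (inv_nonneg).2 hhr.le
      rw [hQdef]
      simp only []
      rw [show (2*((m:ℝ)+1)*s^m*(r^(m+1))⁻¹) * (r⁻¹ * (1-r^2) ^ (-(1-α/2)))⁻¹
            * ((1-s^2) ^ (-(α/2)))
          = (r⁻¹ * (1-r^2) ^ (-(1-α/2)))⁻¹
            * ((2*((m:ℝ)+1)*s^m*(r^(m+1))⁻¹) * (1-s^2) ^ (-(α/2))) from by ring,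
        ENNReal.ofReal_mul hB0]
      ring
    rw [h2]
    have h3 := auxL2 hα0 hα1 m hr.1 hr.2
    calc ((G r)^(2:ℕ) * ENNReal.ofReal ((r⁻¹ * (1-r^2) ^ (-(1-α/2)))⁻¹)) *
          ∫⁻ s in Ioo (0:ℝ) r,
            ENNReal.ofReal ((2*((m:ℝ)+1)*s^m*(r^(m+1))⁻¹) * (1-s^2) ^ (-(α/2)))
        ≤ ((G r)^(2:ℕ) * ENNReal.ofReal ((r⁻¹ * (1-r^2) ^ (-(1-α/2)))⁻¹)) *
          ENNReal.ofReal (2 * (1-r^2) ^ (-(α/2))) := mul_le_mul' le_rfl h3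
      _ = ENNReal.ofReal 2 * ((G r)^(2:ℕ) * ENNReal.ofReal ((1-r^2) ^ (1-α) * r)) := by
          rw [mul_assoc, ← ENNReal.ofReal_mul ((inv_nonneg).2 hhr.le)]
          have hid : (r⁻¹ * (1-r^2) ^ (-(1-α/2)))⁻¹ * (2 * (1-r^2) ^ (-(α/2)))
              = 2 * ((1-r^2) ^ (1-α) * r) := by
            rw [mul_inv, inv_inv, Real.rpow_neg hr2.le, inv_inv]
            have hexp : (1-r^2) ^ ((1-α/2):ℝ) * (1-r^2) ^ (-(α/2):ℝ) = (1-r^2) ^ ((1-α):ℝ) := by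
              rw [← Real.rpow_add hr2]
              congr 1
              ring
            calc (r * (1-r^2) ^ ((1-α/2):ℝ)) * (2 * (1-r^2) ^ (-(α/2):ℝ))
                = 2 * ((1-r^2) ^ ((1-α/2):ℝ) * (1-r^2) ^ (-(α/2):ℝ)) * r := by ring
              _ = 2 * ((1-r^2) ^ ((1-α):ℝ)) * r := by rw [hexp]
              _ = 2 * ((1-r^2) ^ ((1-α):ℝ) * r) := by ring
          rw [hid, ENNReal.ofReal_mul (by norm_num : (0:ℝ) ≤ 2)]
          ring
  -- Step 5 : conclude
  calc ENNReal.ofReal (8/α) * ∫⁻ r in Ioo (0:ℝ) 1,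
        ∫⁻ s in Ioo (0:ℝ) 1, (if s < r then Q s r else 0)
      ≤ ENNReal.ofReal (8/α) * ∫⁻ r in Ioo (0:ℝ) 1,
        ENNReal.ofReal 2 * ((G r)^(2:ℕ) * ENNReal.ofReal ((1-r^2) ^ (1-α) * r)) := by
        apply mul_le_mul' le_rfl
        apply lintegral_mono_ae
        rw [ae_restrict_iff' measurableSet_Ioo]
        exact ae_of_all _ step4
    _ = ENNReal.ofReal (16/α) *
        ∫⁻ r in Ioo (0:ℝ) 1, (G r)^(2:ℕ) * ENNReal.ofReal ((1-r^2) ^ (1-α) * r) := by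
        rw [lintegral_const_mul' _ _ ENNReal.ofReal_ne_top, ← mul_assoc,
          ← ENNReal.ofReal_mul (by positivity : (0:ℝ) ≤ 8/α)]
        congr 2
        ring

/-- `(𝓑_l f)(s) = -2(l-1) s^{l-2} ∫_s^1 f(r) r^{1-l} dr - f(s)` for `l ≥ 2`. -/
noncomputable def Bl (l : ℤ) (f : ℝ → ℂ) (s : ℝ) : ℂ :=
  -(((2 * ((l : ℝ) - 1) * s ^ (l - 2) : ℝ) : ℂ) *
      ∫ r in Ioo s (1:ℝ), ((r ^ (1 - l) : ℝ) : ℂ) * f r) - f s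

set_option maxHeartbeats 2000000 in
theorem stmt14 (α : ℝ) (hα0 : 0 < α) (hα1 : α < 1) (l : ℤ) (hl : 2 ≤ l)
    (f : ℝ → ℂ) (hf : Measurable f)
    (hf2 : (∫⁻ r in Ioo (0:ℝ) 1,
        (‖f r‖₊ : ℝ≥0∞)^2 * ENNReal.ofReal ((1 - r^2) ^ (1 - α) * r)) < ⊤) :
    ∫⁻ s in Ioo (0:ℝ) 1,
        (‖Bl l f s‖₊ : ℝ≥0∞)^2 * ENNReal.ofReal ((1 - s^2) ^ (1 - α) * s)
      ≤ ENNReal.ofReal ((23 / α)^2) *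
        ∫⁻ r in Ioo (0:ℝ) 1,
          (‖f r‖₊ : ℝ≥0∞)^2 * ENNReal.ofReal ((1 - r^2) ^ (1 - α) * r) := by
  classical
  obtain ⟨m, hm⟩ : ∃ m : ℕ, l = (m:ℤ) + 2 := ⟨(l-2).toNat, by omega⟩
  set G : ℝ → ℝ≥0∞ := fun r => (‖f r‖₊ : ℝ≥0∞) with hGdef
  have hG : Measurable G := hf.enorm
  set Φ : ℝ → ℝ≥0∞ := fun s => ∫⁻ r in Ioo (0:ℝ) 1,
    (if s < r then ENNReal.ofReal (2*((m:ℝ)+1)*s^m*(r^(m+1))⁻¹) * G r else 0) with hΦdef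
  have hΦm : Measurable Φ := by
    apply Measurable.lintegral_prod_right
      (f := fun s r => if s < r then ENNReal.ofReal (2*((m:ℝ)+1)*s^m*(r^(m+1))⁻¹) * G r else 0)
    apply Measurable.ite (measurableSet_lt measurable_fst measurable_snd) _ measurable_const
    exact (ENNReal.measurable_ofReal.comp
      ((measurable_const.mul (measurable_fst.pow_const m)).mul
        ((measurable_snd.pow_const (m+1)).inv))).mul (hG.comp measurable_snd)
  have hWm : Measurable fun x : ℝ => ENNReal.ofReal ((1-x^2) ^ (1-α) * x) :=
    ENNReal.measurable_ofReal.comp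
      (((aux_measurable_rpow_const (1-α)).comp
        (measurable_const.sub (measurable_id.pow_const 2))).mul measurable_id)
  -- Step A : pointwise bound
  have stepA : ∀ s ∈ Ioo (0:ℝ) 1, (‖Bl l f s‖₊ : ℝ≥0∞) ≤ Φ s + G s := by
    intro s hs
    have hs0 := hs.1
    have hl1 : (1:ℝ) ≤ (l:ℝ) - 1 := by
      have h2l : (2:ℝ) ≤ (l:ℝ) := by exact_mod_cast hl
      linarith
    have hc0 : (0:ℝ) ≤ 2 * ((l:ℝ) - 1) * s ^ (l - 2) := by
      have h2 : (0:ℝ) ≤ s ^ (l-2) := zpow_nonneg hs0.le _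
      nlinarith
    have hBl : Bl l f s = -((((2 * ((l:ℝ) - 1) * s ^ (l - 2) : ℝ)):ℂ) *
        (∫ r in Ioo s (1:ℝ), ((r ^ (1 - l) : ℝ) : ℂ) * f r) + f s) := by
      simp only [Bl]
      ring
    rw [hBl, nnnorm_neg]
    calc ((‖(((2 * ((l:ℝ) - 1) * s ^ (l - 2) : ℝ)):ℂ) *
          (∫ r in Ioo s (1:ℝ), ((r ^ (1 - l) : ℝ) : ℂ) * f r) + f s‖₊ : ℝ≥0) : ℝ≥0∞)
        ≤ (‖(((2 * ((l:ℝ) - 1) * s ^ (l - 2) : ℝ)):ℂ) *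
            (∫ r in Ioo s (1:ℝ), ((r ^ (1 - l) : ℝ) : ℂ) * f r)‖₊ : ℝ≥0∞)
          + (‖f s‖₊ : ℝ≥0∞) := by
          exact_mod_cast nnnorm_add_le _ _
      _ ≤ Φ s + G s := by
          apply add_le_add_left
          rw [nnnorm_mul, ENNReal.coe_mul]
          have h1 : (‖(((2 * ((l:ℝ) - 1) * s ^ (l - 2) : ℝ)):ℂ)‖₊ : ℝ≥0∞)
              = ENNReal.ofReal (2 * ((l:ℝ) - 1) * s ^ (l - 2)) := by
            rw [Complex.nnnorm_real, ← enorm_eq_nnnorm, Real.enorm_eq_ofReal hc0]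
          rw [h1]
          calc ENNReal.ofReal (2 * ((l:ℝ) - 1) * s ^ (l - 2)) *
              (‖∫ r in Ioo s (1:ℝ), ((r ^ (1 - l) : ℝ) : ℂ) * f r‖₊ : ℝ≥0∞)
              ≤ ENNReal.ofReal (2 * ((l:ℝ) - 1) * s ^ (l - 2)) *
                ∫⁻ r in Ioo s (1:ℝ), (‖((r ^ (1 - l) : ℝ) : ℂ) * f r‖₊ : ℝ≥0∞) :=
              mul_le_mul' le_rfl (enorm_integral_le_lintegral_enorm _)
            _ = ∫⁻ r in Ioo s (1:ℝ), ENNReal.ofReal (2*((m:ℝ)+1)*s^m*(r^(m+1))⁻¹) * G r := by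
                rw [← lintegral_const_mul' _ _ ENNReal.ofReal_ne_top]
                apply setLIntegral_congr_fun measurableSet_Ioo
                intro r hr
                have hr0 : 0 < r := lt_trans hs0 hr.1
                have hrp : (0:ℝ) ≤ r ^ (1-l) := zpow_nonneg hr0.le _
                beta_reduce
                rw [nnnorm_mul, ENNReal.coe_mul, Complex.nnnorm_real,
                  ← enorm_eq_nnnorm (r ^ (1-l)), Real.enorm_eq_ofReal hrp, ← mul_assoc, ← ENNReal.ofReal_mul hc0]
                have e1 : (l:ℝ) - 1 = (m:ℝ) + 1 := by
                  have hcast : (l:ℝ) = (m:ℝ) + 2 := by exact_mod_cast hm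
                  linarith
                have e2 : s ^ (l-2) = s ^ (m:ℕ) := by
                  rw [show l - 2 = ((m:ℕ):ℤ) by omega, zpow_natCast]
                have e3 : r ^ (1-l) = (r ^ (m+1:ℕ))⁻¹ := by
                  rw [show (1:ℤ) - l = -(((m+1:ℕ)):ℤ) by push_cast; omega, zpow_neg, zpow_natCast]
                rw [e1, e2, e3]
            _ = Φ s := by
                simp only [hΦdef]
                rw [aux_ite_right, aux_inter_right hs]
  -- the weighted measure
  set μ : Measure ℝ := (volume.restrict (Ioo (0:ℝ) 1)).withDensity
    (fun x => ENNReal.ofReal ((1-x^2) ^ (1-α) * x)) with hμdef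
  have htr : ∀ (g : ℝ → ℝ≥0∞), Measurable g →
      ∫⁻ x, g x ∂μ = ∫⁻ x in Ioo (0:ℝ) 1, g x * ENNReal.ofReal ((1-x^2) ^ (1-α) * x) := by
    intro g hg
    rw [hμdef, lintegral_withDensity_eq_lintegral_mul _ hWm hg]
    apply lintegral_congr
    intro x
    exact mul_comm _ _
  have hBG2 : Measurable fun s => (Φ s + G s)^(2:ℕ) := (hΦm.add hG).pow_const 2
  have h1 : ∫⁻ s in Ioo (0:ℝ) 1,
      (‖Bl l f s‖₊ : ℝ≥0∞)^2 * ENNReal.ofReal ((1 - s^2) ^ (1 - α) * s)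
      ≤ ∫⁻ x, (Φ x + G x)^(2:ℕ) ∂μ := by
    rw [htr _ hBG2]
    apply lintegral_mono_ae
    rw [ae_restrict_iff' measurableSet_Ioo]
    apply ae_of_all
    intro s hs
    exact mul_le_mul' (pow_le_pow_left' (stepA s hs) 2) le_rfl
  -- Minkowski
  have hmink := ENNReal.lintegral_Lp_add_le (μ := μ)
    hΦm.aemeasurable hG.aemeasurable (by norm_num : (1:ℝ) ≤ 2)
  have hrw1 : ∫⁻ a, (Φ + G) a ^ (2:ℝ) ∂μ = ∫⁻ a, (Φ a + G a)^(2:ℕ) ∂μ := by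
    apply lintegral_congr
    intro a
    rw [Pi.add_apply, aux_rpow_two]
  have hrw2 : ∫⁻ a, Φ a ^ (2:ℝ) ∂μ = ∫⁻ a, Φ a ^ (2:ℕ) ∂μ :=
    lintegral_congr fun a => aux_rpow_two _
  have hrw3 : ∫⁻ a, G a ^ (2:ℝ) ∂μ = ∫⁻ a, G a ^ (2:ℕ) ∂μ :=
    lintegral_congr fun a => aux_rpow_two _
  rw [hrw1, hrw2, hrw3] at hmink
  -- Schur bound
  have hschur : ∫⁻ a, Φ a ^ (2:ℕ) ∂μ
      ≤ ENNReal.ofReal (16/α) * ∫⁻ a, G a ^ (2:ℕ) ∂μ := by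
    rw [htr _ (hΦm.pow_const 2), htr _ (hG.pow_const 2)]
    have hs := aux_schur hα0 hα1 m G hG (fun r => ENNReal.coe_ne_top)
    simpa only [hΦdef] using hs
  set B2 := ∫⁻ a, G a ^ (2:ℕ) ∂μ with hB2
  set A2 := ∫⁻ a, Φ a ^ (2:ℕ) ∂μ with hA2
  set X := ∫⁻ a, (Φ a + G a)^(2:ℕ) ∂μ with hXdef
  have e2 : A2^(1/2:ℝ) ≤ (ENNReal.ofReal (16/α))^(1/2:ℝ) * B2^(1/2:ℝ) := by
    calc A2^(1/2:ℝ) ≤ (ENNReal.ofReal (16/α) * B2)^(1/2:ℝ) :=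
        ENNReal.rpow_le_rpow hschur (by norm_num)
      _ = _ := ENNReal.mul_rpow_of_nonneg _ _ (by norm_num)
  have e4 : X^(1/2:ℝ) ≤ ((ENNReal.ofReal (16/α))^(1/2:ℝ) + 1) * B2^(1/2:ℝ) := by
    calc X^(1/2:ℝ) ≤ A2^(1/2:ℝ) + B2^(1/2:ℝ) := hmink
      _ ≤ ((ENNReal.ofReal (16/α))^(1/2:ℝ) * B2^(1/2:ℝ)) + 1 * B2^(1/2:ℝ) := by
          rw [one_mul]
          exact add_le_add e2 le_rfl
      _ = _ := by rw [add_mul]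
  have e5 : X ≤ ((ENNReal.ofReal (16/α))^(1/2:ℝ) + 1)^(2:ℕ) * B2 := by
    calc X = (X^(1/2:ℝ))^(2:ℕ) := (aux_rpow_half_sq X).symm
      _ ≤ (((ENNReal.ofReal (16/α))^(1/2:ℝ) + 1) * B2^(1/2:ℝ))^(2:ℕ) := pow_le_pow_left' e4 2
      _ = ((ENNReal.ofReal (16/α))^(1/2:ℝ) + 1)^(2:ℕ) * B2 := by
          rw [mul_pow, aux_rpow_half_sq]
  have e6 : ((ENNReal.ofReal (16/α))^(1/2:ℝ) + 1)^(2:ℕ) ≤ ENNReal.ofReal ((23/α)^2) := by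
    have hr1 : (ENNReal.ofReal (16/α))^(1/2:ℝ) ≤ ENNReal.ofReal (4/α) := by
      rw [ENNReal.ofReal_rpow_of_nonneg (by positivity) (by norm_num)]
      apply ENNReal.ofReal_le_ofReal
      have hsq : ((4:ℝ)/α)^2 = 16/α^2 := by
        rw [div_pow]
        norm_num
      have h16 : (16/α : ℝ) ≤ (4/α)^2 := by
        rw [hsq, div_le_div_iff₀ hα0 (by positivity)]
        nlinarith
      calc (16/α : ℝ)^(1/2:ℝ) ≤ ((4/α)^2)^(1/2:ℝ) :=
          Real.rpow_le_rpow (by positivity) h16 (by norm_num)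
        _ = 4/α := by
            rw [← Real.rpow_natCast ((4:ℝ)/α) 2, ← Real.rpow_mul (by positivity)]
            norm_num
    calc ((ENNReal.ofReal (16/α))^(1/2:ℝ) + 1)^(2:ℕ)
        ≤ (ENNReal.ofReal (4/α) + ENNReal.ofReal 1)^(2:ℕ) := by
          apply pow_le_pow_left'
          rw [ENNReal.ofReal_one]
          exact add_le_add hr1 le_rfl
      _ = ENNReal.ofReal ((4/α + 1)^2) := by
          rw [← ENNReal.ofReal_add (by positivity) (by norm_num),
            ENNReal.ofReal_pow (by positivity)]
      _ ≤ ENNReal.ofReal ((23/α)^2) := by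
          apply ENNReal.ofReal_le_ofReal
          have hle : (4:ℝ)/α + 1 ≤ 23/α := by
            rw [← sub_nonneg]
            have : (23:ℝ)/α - (4/α + 1) = (19 - α)/α := by
              field_simp
              ring
            rw [this]
            apply div_nonneg (by linarith) hα0.le
          exact pow_le_pow_left₀ (by positivity) hle 2
  calc ∫⁻ s in Ioo (0:ℝ) 1,
      (‖Bl l f s‖₊ : ℝ≥0∞)^2 * ENNReal.ofReal ((1 - s^2) ^ (1 - α) * s)
      ≤ X := h1
    _ ≤ ((ENNReal.ofReal (16/α))^(1/2:ℝ) + 1)^(2:ℕ) * B2 := e5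
    _ ≤ ENNReal.ofReal ((23/α)^2) * B2 := mul_le_mul' e6 le_rfl
    _ = ENNReal.ofReal ((23 / α)^2) *
        ∫⁻ r in Ioo (0:ℝ) 1,
          (‖f r‖₊ : ℝ≥0∞)^2 * ENNReal.ofReal ((1 - r^2) ^ (1 - α) * r) := by
        rw [hB2, htr _ (hG.pow_const 2)]
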